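/- arXiv:1611.01496 — 3 statements merged into one kernel-verified Lean document; each statement's English description precedes it below -/
import Mathlib

section
/- Let ‖·‖ be a strictly convex norm on ℝ^d, let x₀, y ∈ ℝ^d with y ≠ x₀, set u = y − x₀, and let z ∈ ℝ^d be a point not on the line through x₀ and y. Define σ(t) = ‖z − (x₀ + t u)‖ − ‖z − x₀‖ + t‖u‖ for t ∈ (−1, 1). Then σ is convex, σ(0) = 0, σ(t) > 0 for t > 0 and σ(t) < 0 for t < 0; in particular the right derivative of σ at 0 is strictly positive. -/
/-- For a strictly convex norm `N` on `ℝ^d`, points `x₀ ≠ y`, `u = y − x₀`, and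
`z` not on the line through `x₀` and `y`, the function
`σ(t) = N(z − (x₀ + t u)) − N(z − x₀) + t N(u)` is convex on `(−1,1)`, vanishes at `0`,
is positive for `t > 0` and negative for `t < 0`; in particular its right derivative
at `0` is strictly positive (there is `c > 0` with `σ(t) ≥ c t` for `t ∈ (0,1)`). -/
theorem stmt1 (d : ℕ) (N : (Fin d → ℝ) → ℝ)
    (hadd : ∀ a b, N (a + b) ≤ N a + N b)
    (hsmul : ∀ (c : ℝ) a, N (c • a) = |c| * N a)
    (hdef : ∀ a, N a = 0 → a = 0)
    (hstrict : ∀ a b, a ≠ 0 → b ≠ 0 → N (a + b) = N a + N b →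
      ∃ l : ℝ, 0 < l ∧ a = l • b)
    (x₀ y z : Fin d → ℝ) (hy : y ≠ x₀)
    (hz : ∀ s : ℝ, z ≠ x₀ + s • (y - x₀)) :
    let u := y - x₀
    let σ : ℝ → ℝ := fun t => N (z - (x₀ + t • u)) - N (z - x₀) + t * N u
    ConvexOn ℝ (Set.Ioo (-1 : ℝ) 1) σ ∧ σ 0 = 0 ∧
      (∀ t ∈ Set.Ioo (-1 : ℝ) 1, 0 < t → 0 < σ t) ∧
      (∀ t ∈ Set.Ioo (-1 : ℝ) 1, t < 0 → σ t < 0) ∧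
      (∃ c : ℝ, 0 < c ∧ ∀ t ∈ Set.Ioo (0 : ℝ) 1, c * t ≤ σ t) := by
  intro u σ
  have hu : u ≠ 0 := sub_ne_zero.mpr hy
  -- strict triangle inequality
  have key : ∀ a b : Fin d → ℝ, a ≠ 0 → b ≠ 0 → (∀ l : ℝ, 0 < l → a ≠ l • b) →
      N (a + b) < N a + N b := by
    intro a b ha hb h
    rcases lt_or_eq_of_le (hadd a b) with h' | h'
    · exact h'
    · rcases hstrict a b ha hb h' with ⟨l, hl, he⟩
      exact absurd he (h l hl)
  -- convexity
  have hconv : ConvexOn ℝ (Set.Ioo (-1 : ℝ) 1) σ := by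
    refine ⟨convex_Ioo _ _, ?_⟩
    intro s _ t _ p q hp hq hpq
    obtain rfl : q = 1 - p := by linarith
    have hvec : z - (x₀ + (p * s + (1 - p) * t) • u)
        = p • (z - (x₀ + s • u)) + (1 - p) • (z - (x₀ + t • u)) := by
      module
    have h1 : N (p • (z - (x₀ + s • u)) + (1 - p) • (z - (x₀ + t • u)))
        ≤ p * N (z - (x₀ + s • u)) + (1 - p) * N (z - (x₀ + t • u)) := by
      calc N (p • (z - (x₀ + s • u)) + (1 - p) • (z - (x₀ + t • u)))
          ≤ N (p • (z - (x₀ + s • u))) + N ((1 - p) • (z - (x₀ + t • u))) := hadd _ _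
        _ = p * N (z - (x₀ + s • u)) + (1 - p) * N (z - (x₀ + t • u)) := by
            rw [hsmul, hsmul, abs_of_nonneg hp, abs_of_nonneg hq]
    simp only [σ, smul_eq_mul]
    rw [hvec]
    nlinarith [h1]
  have hσ0 : σ 0 = 0 := by simp [σ]
  -- positivity for t > 0
  have hpos : ∀ t ∈ Set.Ioo (-1 : ℝ) 1, 0 < t → 0 < σ t := by
    intro t _ ht
    have ha : z - (x₀ + t • u) ≠ 0 := by
      intro h
      exact hz t (by rwa [sub_eq_zero] at h)
    have hb : t • u ≠ 0 := smul_ne_zero ht.ne' hu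
    have hnp : ∀ l : ℝ, 0 < l → z - (x₀ + t • u) ≠ l • (t • u) := by
      intro l hl h
      apply hz (t + l * t)
      have : z = x₀ + t • u + l • t • u := by
        rw [← h]; module
      rw [this]; module
    have := key _ _ ha hb hnp
    have hab : z - (x₀ + t • u) + t • u = z - x₀ := by module
    rw [hab, hsmul, abs_of_pos ht] at this
    simp only [σ]
    linarith
  -- negativity for t < 0
  have hneg : ∀ t ∈ Set.Ioo (-1 : ℝ) 1, t < 0 → σ t < 0 := by
    intro t _ ht
    have ha : (-t) • u ≠ 0 := smul_ne_zero (by linarith : (-t) ≠ 0) hu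
    have hb : z - x₀ ≠ 0 := by
      intro h
      apply hz 0
      rw [sub_eq_zero] at h
      simp [h]
    have hnp : ∀ l : ℝ, 0 < l → (-t) • u ≠ l • (z - x₀) := by
      intro l hl h
      apply hz (l⁻¹ * -t)
      have h2 : z - x₀ = (l⁻¹ * -t) • u := by
        rw [mul_smul, h, smul_smul, inv_mul_cancel₀ hl.ne', one_smul]
      exact sub_eq_iff_eq_add'.mp h2
    have := key _ _ ha hb hnp
    have hab : (-t) • u + (z - x₀) = z - (x₀ + t • u) := by module
    rw [hab, hsmul, abs_of_pos (by linarith : (0:ℝ) < -t)] at this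
    simp only [σ]
    nlinarith
  refine ⟨hconv, hσ0, hpos, hneg, ?_⟩
  -- the derivative bound via slope monotonicity
  have hm : (-1/2 : ℝ) ∈ Set.Ioo (-1 : ℝ) 1 := by norm_num
  have hσm : σ (-1/2) < 0 := hneg _ hm (by norm_num)
  refine ⟨-2 * σ (-1/2), by linarith, ?_⟩
  intro t ht
  have htI : t ∈ Set.Ioo (-1 : ℝ) 1 := ⟨by linarith [ht.1], ht.2⟩
  have hs := hconv.slope_mono_adjacent hm htI (by norm_num : (-1/2 : ℝ) < 0) ht.1
  rw [hσ0] at hs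
  have h1 : (0 - σ (-1/2)) / (0 - (-1/2 : ℝ)) = -2 * σ (-1/2) := by ring
  rw [h1] at hs
  have ht0 : (t : ℝ) ≠ 0 := ne_of_gt ht.1
  calc -2 * σ (-1/2) * t ≤ (σ t - 0) / (t - 0) * t := by nlinarith [ht.1]
    _ = σ t := by rw [sub_zero, sub_zero, div_mul_cancel₀ _ ht0]
end

section
/- Let β : ℝ^d → ℝ be convex and define ψ_i : ℝ → ℝ successively for i = 1,…,d by ψ_i(y_i) = sup over (y_j)_{j≠i} of ( β(y) − ∑_{j<i} ψ_j(y_j) − ∑_{j>i} g_j(y_j) ), where g_j : ℝ → ℝ are given functions with ∑_j g_j(y_j) ≥ β(y) for all y, and assume all suprema are finite. Then each ψ_i is convex, ψ_i ≤ g_i pointwise, and β(y) ≤ ∑_i ψ_i(y_i) for all y. -/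
open scoped BigOperators

/-- Successive partial Legendre transforms of a convex function: if `β` is convex,
`∑ g_j(y_j) ≥ β(y)` for all `y`, and each `ψ_i` is defined by the (finite) supremum
`ψ_i(y_i) = sup_{(y_j)_{j≠i}} ( β(y) − ∑_{j<i} ψ_j(y_j) − ∑_{j>i} g_j(y_j) )`, then each
`ψ_i` is convex, `ψ_i ≤ g_i` pointwise, and `β(y) ≤ ∑ ψ_i(y_i)` for all `y`. -/
theorem stmt13 (d : ℕ) (β : (Fin d → ℝ) → ℝ) (hβ : ConvexOn ℝ Set.univ β)
    (g ψ : Fin d → ℝ → ℝ)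
    (hg : ∀ y : Fin d → ℝ, β y ≤ ∑ j, g j (y j))
    (hψ : ∀ (i : Fin d) (t : ℝ),
      IsLUB {v : ℝ | ∃ y : Fin d → ℝ, y i = t ∧
        v = β y - (∑ j ∈ Finset.univ.filter (fun j => j < i), ψ j (y j))
              - (∑ j ∈ Finset.univ.filter (fun j => i < j), g j (y j))} (ψ i t)) :
    (∀ i, ConvexOn ℝ Set.univ (ψ i)) ∧ (∀ i t, ψ i t ≤ g i t) ∧
    (∀ y : Fin d → ℝ, β y ≤ ∑ i, ψ i (y i)) := by
  have hmem : ∀ (i : Fin d) (y : Fin d → ℝ),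
      β y - (∑ j ∈ Finset.univ.filter (fun j => j < i), ψ j (y j))
        - (∑ j ∈ Finset.univ.filter (fun j => i < j), g j (y j)) ≤ ψ i (y i) := by
    intro i y
    exact (hψ i (y i)).1 ⟨y, rfl, rfl⟩
  -- Key inequality by induction on a natural cutoff
  have hP : ∀ n : ℕ, ∀ y : Fin d → ℝ,
      β y ≤ (∑ j ∈ Finset.univ.filter (fun j : Fin d => (j : ℕ) < n), ψ j (y j))
          + ∑ j ∈ Finset.univ.filter (fun j : Fin d => n ≤ (j : ℕ)), g j (y j) := by
    intro n
    induction n with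
    | zero =>
      intro y
      simpa using hg y
    | succ m ih =>
      intro y
      by_cases hm : m < d
      · set i : Fin d := ⟨m, hm⟩ with hi
        have h1 := hmem i y
        have e1 : Finset.univ.filter (fun j : Fin d => (j : ℕ) < m + 1)
            = insert i (Finset.univ.filter (fun j : Fin d => j < i)) := by
          ext j
          simp only [Finset.mem_filter, Finset.mem_univ, true_and, Finset.mem_insert,
            Fin.lt_def, hi, Fin.ext_iff]
          omega
        have e2 : Finset.univ.filter (fun j : Fin d => m + 1 ≤ (j : ℕ))
            = Finset.univ.filter (fun j : Fin d => i < j) := by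
          ext j
          simp only [Finset.mem_filter, Finset.mem_univ, true_and, Fin.lt_def, hi]
          omega
        have hni : i ∉ Finset.univ.filter (fun j : Fin d => j < i) := by
          simp [lt_irrefl]
        rw [e1, Finset.sum_insert hni, e2]
        linarith
      · have e1 : Finset.univ.filter (fun j : Fin d => (j : ℕ) < m + 1)
            = Finset.univ.filter (fun j : Fin d => (j : ℕ) < m) := by
          ext j
          simp only [Finset.mem_filter, Finset.mem_univ, true_and]
          have := j.isLt; omega
        have e2 : Finset.univ.filter (fun j : Fin d => m + 1 ≤ (j : ℕ))
            = Finset.univ.filter (fun j : Fin d => m ≤ (j : ℕ)) := by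
          ext j
          simp only [Finset.mem_filter, Finset.mem_univ, true_and]
          have := j.isLt; omega
        rw [e1, e2]
        exact ih y
  refine ⟨?_, ?_, ?_⟩
  · -- convexity
    intro i
    refine ⟨convex_univ, ?_⟩
    intro t1 _ t2 _ a b ha hb hab
    simp only [smul_eq_mul]
    apply (hψ i (a * t1 + b * t2)).2
    rintro v ⟨y, hyi, rfl⟩
    set y1 : Fin d → ℝ := Function.update y i t1 with hy1
    set y2 : Fin d → ℝ := Function.update y i t2 with hy2
    have hyeq : y = a • y1 + b • y2 := by
      funext j
      by_cases hj : j = i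
      · subst hj
        simp [hy1, hy2, hyi]
      · simp only [hy1, hy2, Pi.add_apply, Pi.smul_apply, smul_eq_mul,
          Function.update_of_ne hj]
        linear_combination (-(y j)) * hab
    have hβle : β y ≤ a * β y1 + b * β y2 := by
      calc β y = β (a • y1 + b • y2) := by rw [← hyeq]
      _ ≤ a • β y1 + b • β y2 := hβ.2 (Set.mem_univ y1) (Set.mem_univ y2) ha hb hab
      _ = a * β y1 + b * β y2 := by simp [smul_eq_mul]
    have hA1 : ∀ j ∈ Finset.univ.filter (fun j : Fin d => j < i), ψ j (y1 j) = ψ j (y j) := by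
      intro j hj
      simp only [Finset.mem_filter] at hj
      rw [hy1, Function.update_of_ne (ne_of_lt hj.2)]
    have hA2 : ∀ j ∈ Finset.univ.filter (fun j : Fin d => j < i), ψ j (y2 j) = ψ j (y j) := by
      intro j hj
      simp only [Finset.mem_filter] at hj
      rw [hy2, Function.update_of_ne (ne_of_lt hj.2)]
    have hB1 : ∀ j ∈ Finset.univ.filter (fun j : Fin d => i < j), g j (y1 j) = g j (y j) := by
      intro j hj
      simp only [Finset.mem_filter] at hj
      rw [hy1, Function.update_of_ne (ne_of_gt hj.2)]
    have hB2 : ∀ j ∈ Finset.univ.filter (fun j : Fin d => i < j), g j (y2 j) = g j (y j) := by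
      intro j hj
      simp only [Finset.mem_filter] at hj
      rw [hy2, Function.update_of_ne (ne_of_gt hj.2)]
    have h1 := hmem i y1
    have h2 := hmem i y2
    rw [Finset.sum_congr rfl hA1, Finset.sum_congr rfl hB1] at h1
    rw [Finset.sum_congr rfl hA2, Finset.sum_congr rfl hB2] at h2
    have hy1i : y1 i = t1 := Function.update_self i t1 y
    have hy2i : y2 i = t2 := Function.update_self i t2 y
    rw [hy1i] at h1
    rw [hy2i] at h2
    set A := ∑ j ∈ Finset.univ.filter (fun j : Fin d => j < i), ψ j (y j) with hA
    set B := ∑ j ∈ Finset.univ.filter (fun j : Fin d => i < j), g j (y j) with hB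
    have key : a * (β y1 - A - B) + b * (β y2 - A - B) ≤ a * ψ i t1 + b * ψ i t2 :=
      add_le_add (mul_le_mul_of_nonneg_left h1 ha) (mul_le_mul_of_nonneg_left h2 hb)
    have expand : a * (β y1 - A - B) + b * (β y2 - A - B)
        = a * β y1 + b * β y2 - A - B := by
      linear_combination (-(A + B)) * hab
    linarith [key, expand, hβle]
  · -- ψ i ≤ g i
    intro i t
    apply (hψ i t).2
    rintro v ⟨y, hyi, rfl⟩
    have h := hP (i : ℕ) y
    have e1 : Finset.univ.filter (fun j : Fin d => (j : ℕ) < (i : ℕ))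
        = Finset.univ.filter (fun j : Fin d => j < i) := by
      ext j
      simp only [Finset.mem_filter, Finset.mem_univ, true_and, Fin.lt_def]
    have e2 : Finset.univ.filter (fun j : Fin d => (i : ℕ) ≤ (j : ℕ))
        = insert i (Finset.univ.filter (fun j : Fin d => i < j)) := by
      ext j
      simp only [Finset.mem_filter, Finset.mem_univ, true_and, Finset.mem_insert,
        Fin.lt_def, Fin.ext_iff]
      omega
    have hni : i ∉ Finset.univ.filter (fun j : Fin d => i < j) := by
      simp [lt_irrefl]
    rw [e1, e2, Finset.sum_insert hni] at h
    rw [← hyi]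
    linarith
  · -- β ≤ ∑ ψ
    intro y
    have h := hP d y
    have e1 : Finset.univ.filter (fun j : Fin d => (j : ℕ) < d) = Finset.univ := by
      ext j; simp only [Finset.mem_filter, Finset.mem_univ, true_and, iff_true]; exact j.isLt
    have e2 : Finset.univ.filter (fun j : Fin d => d ≤ (j : ℕ)) = ∅ := by
      ext j
      simp only [Finset.mem_filter, Finset.mem_univ, true_and, Finset.notMem_empty,
        iff_false]
      have := j.isLt; omega
    rw [e1, e2, Finset.sum_empty, add_zero] at h
    exact h
end

section
/- Let μ ≤_c ν be probability measures on ℝ in convex order with potential functions u_μ, u_ν. If z ∈ ℝ satisfies u_μ(z) = u_ν(z), then every martingale coupling π ∈ MT(μ, ν) decomposes at z: π gives no mass to the set {(x,y) : x < z < y or y < z < x}; equivalently, π is concentrated on ((−∞, z] × (−∞, z]) ∪ ([z, ∞) × [z, ∞)). -/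
open MeasureTheory

/-- A martingale coupling on `E × E`. -/
def IsMartingaleCoupling {E : Type*} [NormedAddCommGroup E] [NormedSpace ℝ E]
    [CompleteSpace E] [MeasurableSpace E] (π : Measure (E × E)) : Prop :=
  IsProbabilityMeasure π ∧ Integrable (fun p : E × E => ‖p.1‖ + ‖p.2‖) π ∧
  ∀ s : Set E, MeasurableSet s →
    (∫ p in s ×ˢ Set.univ, p.2 ∂π) = ∫ p in s ×ˢ Set.univ, p.1 ∂π

/-- If `μ ≤_c ν` and the potential functions agree at `z`, then every martingale
coupling of `μ` and `ν` gives no mass to `{(x,y) : x < z < y or y < z < x}`. -/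
theorem stmt17 (μ ν : Measure ℝ) [IsProbabilityMeasure μ] [IsProbabilityMeasure ν]
    (hμ : Integrable (fun t => |t|) μ) (hν : Integrable (fun t => |t|) ν)
    (hconv : ∀ ξ : ℝ → ℝ, ConvexOn ℝ Set.univ ξ → Integrable ξ μ → Integrable ξ ν →
      ∫ t, ξ t ∂μ ≤ ∫ t, ξ t ∂ν)
    (z : ℝ) (hz : (∫ t, |z - t| ∂μ) = ∫ t, |z - t| ∂ν)
    (π : Measure (ℝ × ℝ)) (hπ : IsMartingaleCoupling π)
    (hfst : π.fst = μ) (hsnd : π.snd = ν) :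
    π {p : ℝ × ℝ | (p.1 < z ∧ z < p.2) ∨ (p.2 < z ∧ z < p.1)} = 0 := by
  obtain ⟨hprob, hint, hmart⟩ := hπ
  set φ : ℝ × ℝ → ℝ := fun p =>
    |z - p.2| - |z - p.1| - (if p.1 < z then (-1:ℝ) else 1) * (p.2 - p.1) with hφdef
  -- integrability of the coordinates
  have hx : Integrable (fun p : ℝ × ℝ => p.1) π :=
    hint.mono' measurable_fst.aestronglyMeasurable
      (Filter.Eventually.of_forall fun p => by
        simp only [Real.norm_eq_abs]
        exact le_add_of_nonneg_right (abs_nonneg _))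
  have hy : Integrable (fun p : ℝ × ℝ => p.2) π :=
    hint.mono' measurable_snd.aestronglyMeasurable
      (Filter.Eventually.of_forall fun p => by
        simp only [Real.norm_eq_abs]
        exact le_add_of_nonneg_left (abs_nonneg _))
  have hay : Integrable (fun p : ℝ × ℝ => |z - p.2|) π := ((integrable_const z).sub hy).abs
  have hax : Integrable (fun p : ℝ × ℝ => |z - p.1|) π := ((integrable_const z).sub hx).abs
  have hmeas_ind : Measurable fun p : ℝ × ℝ => (if p.1 < z then (-1:ℝ) else 1) := by
    exact Measurable.ite (measurableSet_lt measurable_fst measurable_const)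
      measurable_const measurable_const
  have hterm3 : Integrable (fun p : ℝ × ℝ =>
      (if p.1 < z then (-1:ℝ) else 1) * (p.2 - p.1)) π := by
    apply (hy.sub hx).bdd_mul (c := 1) hmeas_ind.aestronglyMeasurable
    refine Filter.Eventually.of_forall fun p => ?_
    by_cases h : p.1 < z <;> simp [h]
  have hφint : Integrable φ π := (hay.sub hax).sub hterm3
  -- φ is nonnegative
  have hφnonneg : ∀ p, 0 ≤ φ p := by
    intro p
    simp only [hφdef]
    by_cases h : p.1 < z
    · have h1 : |z - p.1| = z - p.1 := abs_of_nonneg (by linarith)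
      have h2 : z - p.2 ≤ |z - p.2| := le_abs_self _
      simp only [h, if_true, h1]
      linarith
    · have h1 : |z - p.1| = -(z - p.1) := abs_of_nonpos (by push_neg at h; linarith)
      have h2 : -(z - p.2) ≤ |z - p.2| := neg_le_abs _
      simp only [h, if_false, h1]
      linarith
  -- martingale: ∫ (y - x) over s ×ˢ univ is zero
  have msub : ∀ s : Set ℝ, MeasurableSet s →
      (∫ p in s ×ˢ Set.univ, (p.2 - p.1) ∂π) = 0 := by
    intro s hs
    rw [integral_sub hy.restrict hx.restrict, sub_eq_zero]
    exact hmart s hs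
  -- the third term integrates to zero
  have hSset : MeasurableSet ((Set.Iio z) ×ˢ (Set.univ : Set ℝ)) :=
    measurableSet_Iio.prod MeasurableSet.univ
  have hcompl : ((Set.Iio z) ×ˢ (Set.univ : Set ℝ))ᶜ
      = (Set.Iio z)ᶜ ×ˢ (Set.univ : Set ℝ) := by
    ext p; simp
  have hthird : (∫ p, (if p.1 < z then (-1:ℝ) else 1) * (p.2 - p.1) ∂π) = 0 := by
    rw [← integral_add_compl hSset hterm3]
    have e1 : (∫ p in (Set.Iio z) ×ˢ (Set.univ : Set ℝ),
        (if p.1 < z then (-1:ℝ) else 1) * (p.2 - p.1) ∂π)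
        = ∫ p in (Set.Iio z) ×ˢ (Set.univ : Set ℝ), -(p.2 - p.1) ∂π := by
      refine setIntegral_congr_fun hSset fun p hp => ?_
      have : p.1 < z := hp.1
      simp [this]
    have e2 : (∫ p in ((Set.Iio z) ×ˢ (Set.univ : Set ℝ))ᶜ,
        (if p.1 < z then (-1:ℝ) else 1) * (p.2 - p.1) ∂π)
        = ∫ p in ((Set.Iio z))ᶜ ×ˢ (Set.univ : Set ℝ), (p.2 - p.1) ∂π := by
      rw [hcompl]
      refine setIntegral_congr_fun (measurableSet_Iio.compl.prod MeasurableSet.univ)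
        fun p hp => ?_
      have : ¬ p.1 < z := hp.1
      simp [this]
    rw [e1, e2, integral_neg, msub (Set.Iio z) measurableSet_Iio,
      msub (Set.Iio z)ᶜ measurableSet_Iio.compl]
    simp
  -- marginal identities
  have hmy : (∫ p, |z - p.2| ∂π) = ∫ t, |z - t| ∂ν := by
    rw [← hsnd, Measure.snd, integral_map measurable_snd.aemeasurable]
    exact (continuous_const.sub continuous_id).abs.aestronglyMeasurable
  have hmx : (∫ p, |z - p.1| ∂π) = ∫ t, |z - t| ∂μ := by
    rw [← hfst, Measure.fst, integral_map measurable_fst.aemeasurable]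
    exact (continuous_const.sub continuous_id).abs.aestronglyMeasurable
  -- total integral of φ is zero
  have hφzero : (∫ p, φ p ∂π) = 0 := by
    simp only [hφdef]
    rw [integral_sub (f := fun p : ℝ × ℝ => |z - p.2| - |z - p.1|)
      (g := fun p : ℝ × ℝ => (if p.1 < z then (-1:ℝ) else 1) * (p.2 - p.1))
      (hay.sub hax) hterm3, integral_sub hay hax, hmy, hmx, hz, hthird]
    ring
  -- hence φ = 0 a.e.
  have hae : ∀ᵐ p ∂π, φ p = 0 := by
    have := (integral_eq_zero_iff_of_nonneg hφnonneg hφint).mp hφzero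
    filter_upwards [this] with p hp using hp
  have hnull : π {p : ℝ × ℝ | ¬ φ p = 0} = 0 := ae_iff.mp hae
  refine measure_mono_null ?_ hnull
  intro p hp
  rcases hp with ⟨h1, h2⟩ | ⟨h1, h2⟩
  · have hx1 : p.1 < z := h1
    have : φ p = 2 * (p.2 - z) := by
      simp only [hφdef, hx1, if_true]
      rw [abs_of_nonpos (by linarith), abs_of_nonneg (by linarith)]
      ring
    simp only [Set.mem_setOf_eq, this]
    intro h; nlinarith
  · have hx1 : ¬ p.1 < z := by linarith
    have : φ p = 2 * (z - p.2) := by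
      simp only [hφdef, hx1, if_false]
      rw [abs_of_nonneg (by linarith), abs_of_nonpos (by linarith)]
      ring
    simp only [Set.mem_setOf_eq, this]
    intro h; nlinarith
end
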